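/- Let l > 0 and T > 0. Let f : ℝ × [0,T] → ℝ satisfy: f, ∂_x f and ∂_t f are continuous; for each t, f(x,t) → 0 as |x| → ∞ uniformly in t; sup_{x,t} |f(x,t)| < l; for every (x,t) the principal-value limit Λf(x,t) := (1/π)·lim_{ε→0⁺} ∫_{|y|>ε} (f(x,t)−f(x−y,t))/y² dy exists, and Λf is continuous and bounded; and ∂_t f(x,t) = (−1/(1+(∂_x f(x,t))²) + 1/(1+l²−f(x,t)²))·Λf(x,t) pointwise. Then t ↦ sup_x |f(x,t)| is nonincreasing on [0,T]; in particular sup_x |f(x,t)| ≤ sup_x |f(x,0)| for all t ∈ [0,T]. -/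

import Mathlib

open MeasureTheory Filter Set

/-- The truncated principal-value integral for the fractional Laplacian on `ℝ`. -/
noncomputable def pvIntegral (u : ℝ → ℝ) (x ε : ℝ) : ℝ :=
  (1 / Real.pi) * ∫ y in {y : ℝ | ε < |y|}, (u x - u (x - y)) / y ^ 2

/-- `Λu(x) = L` in the principal-value sense. -/
def HasPVLambda (u : ℝ → ℝ) (x L : ℝ) : Prop :=
  Tendsto (fun ε => pvIntegral u x ε) (nhdsWithin 0 (Set.Ioi 0)) (nhds L)

set_option maxHeartbeats 1000000 in
/-- the `L^∞` maximum principle for the model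
`∂_t f = (−1/(1+(∂_x f)²) + 1/(1+l²−f²))·Λf` on `ℝ × [0,T]`:
`t ↦ sup_x |f(x,t)|` is nonincreasing. -/
theorem linfty_maximum_principle
    (l T : ℝ) (hl : 0 < l) (hT : 0 < T)
    (f Λf : ℝ → ℝ → ℝ)
    -- f, ∂_x f and ∂_t f are continuous
    (hfc : ContinuousOn (fun p : ℝ × ℝ => f p.1 p.2) (univ ×ˢ Icc 0 T))
    (hfx : ∀ t ∈ Icc (0:ℝ) T, Differentiable ℝ fun x => f x t)
    (hfxc : ContinuousOn (fun p : ℝ × ℝ => deriv (fun x => f x p.2) p.1) (univ ×ˢ Icc 0 T))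
    (htc : ContinuousOn
      (fun p : ℝ × ℝ => derivWithin (fun s => f p.1 s) (Icc 0 T) p.2) (univ ×ˢ Icc 0 T))
    -- f(x,t) → 0 as |x| → ∞, uniformly in t
    (hdecay : ∀ ε > (0:ℝ), ∃ R : ℝ, ∀ t ∈ Icc (0:ℝ) T, ∀ x : ℝ, R ≤ |x| → |f x t| ≤ ε)
    -- sup_{x,t} |f| < l
    (hamp : ∃ c : ℝ, c < l ∧ ∀ x : ℝ, ∀ t ∈ Icc (0:ℝ) T, |f x t| ≤ c)
    -- the principal value Λf exists everywhere, and Λf is continuous and bounded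
    (hpv : ∀ x : ℝ, ∀ t ∈ Icc (0:ℝ) T, HasPVLambda (fun y => f y t) x (Λf x t))
    (hΛc : ContinuousOn (fun p : ℝ × ℝ => Λf p.1 p.2) (univ ×ˢ Icc 0 T))
    (hΛb : ∃ M : ℝ, ∀ x : ℝ, ∀ t ∈ Icc (0:ℝ) T, |Λf x t| ≤ M)
    -- the equation holds pointwise
    (heq : ∀ x : ℝ, ∀ t ∈ Icc (0:ℝ) T,
      HasDerivWithinAt (fun s => f x s)
        ((-(1 / (1 + (deriv (fun y => f y t) x) ^ 2))
            + 1 / (1 + l ^ 2 - f x t ^ 2)) * Λf x t) (Icc 0 T) t) :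
    (∀ t₁ ∈ Icc (0:ℝ) T, ∀ t₂ ∈ Icc (0:ℝ) T, t₁ ≤ t₂ →
        (⨆ x : ℝ, |f x t₂|) ≤ ⨆ x : ℝ, |f x t₁|) ∧
    ∀ t ∈ Icc (0:ℝ) T, (⨆ x : ℝ, |f x t|) ≤ ⨆ x : ℝ, |f x 0| := by
  obtain ⟨c, hcl, hc⟩ := hamp
  obtain ⟨Mb, hMb⟩ := hΛb
  have h0T : (0:ℝ) ∈ Icc (0:ℝ) T := ⟨le_rfl, hT.le⟩
  have hc0 : 0 ≤ c := le_trans (abs_nonneg _) (hc 0 0 h0T)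
  have hMb0 : 0 ≤ Mb := le_trans (abs_nonneg _) (hMb 0 0 h0T)
  set K : ℝ := 2 * Mb with hKdef
  have hK0 : 0 ≤ K := by positivity
  set D : ℝ → ℝ → ℝ := fun p s =>
    (-(1 / (1 + (deriv (fun y => f y s) p) ^ 2)) + 1 / (1 + l ^ 2 - f p s ^ 2)) * Λf p s
    with hDdef
  have hderiv : ∀ p : ℝ, ∀ s ∈ Icc (0:ℝ) T,
      HasDerivWithinAt (fun u => f p u) (D p s) (Icc 0 T) s := fun p s hs => heq p s hs
  have hden : ∀ (p : ℝ), ∀ s ∈ Icc (0:ℝ) T, 1 ≤ 1 + l ^ 2 - f p s ^ 2 := by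
    intro p s hs
    have h1 := hc p s hs
    have h2 := abs_nonneg (f p s)
    have h3 : f p s ^ 2 ≤ c ^ 2 := by nlinarith [sq_abs (f p s)]
    nlinarith
  have hDle : ∀ (p : ℝ), ∀ s ∈ Icc (0:ℝ) T, |D p s| ≤ K := by
    intro p s hs
    rw [hDdef]
    simp only []
    rw [abs_mul]
    have hco : |(-(1 / (1 + (deriv (fun y => f y s) p) ^ 2)) + 1 / (1 + l ^ 2 - f p s ^ 2))| ≤ 2 := by
      have h2 := hden p s hs
      have h1 : (0:ℝ) < 1 + (deriv (fun y => f y s) p) ^ 2 := by positivity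
      have a1 : (0:ℝ) ≤ 1 / (1 + (deriv (fun y => f y s) p) ^ 2) := by positivity
      have a2 : 1 / (1 + (deriv (fun y => f y s) p) ^ 2) ≤ 1 := by
        rw [div_le_one h1]; nlinarith
      have b1 : (0:ℝ) ≤ 1 / (1 + l ^ 2 - f p s ^ 2) := div_nonneg zero_le_one (by linarith)
      have b2 : 1 / (1 + l ^ 2 - f p s ^ 2) ≤ 1 := by rw [div_le_one (by linarith)]; linarith
      rw [abs_le]; constructor <;> linarith
    calc |(-(1 / (1 + (deriv (fun y => f y s) p) ^ 2)) + 1 / (1 + l ^ 2 - f p s ^ 2))| * |Λf p s|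
        ≤ 2 * Mb := mul_le_mul hco (hMb p s hs) (abs_nonneg _) (by norm_num)
      _ = K := hKdef.symm
  have hLip : ∀ (p : ℝ), ∀ s ∈ Icc (0:ℝ) T, ∀ u ∈ Icc (0:ℝ) T,
      |f p u - f p s| ≤ K * |u - s| := by
    intro p s hs u hu
    have h := Convex.norm_image_sub_le_of_norm_hasDerivWithin_le
      (fun x hx => hderiv p x hx) (fun x hx => by simpa [Real.norm_eq_abs] using hDle p x hx)
      (convex_Icc 0 T) hs hu
    simpa [Real.norm_eq_abs] using h
  set M : ℝ → ℝ := fun t => ⨆ x, |f x t| with hMdef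
  have hBdd : ∀ t ∈ Icc (0:ℝ) T, BddAbove (range fun x => |f x t|) := by
    intro t ht; exact ⟨c, by rintro _ ⟨x, rfl⟩; exact hc x t ht⟩
  have hMf : ∀ t ∈ Icc (0:ℝ) T, ∀ x, |f x t| ≤ M t := fun t ht x => le_ciSup (hBdd t ht) x
  have hM0 : ∀ t ∈ Icc (0:ℝ) T, 0 ≤ M t := fun t ht => le_trans (abs_nonneg _) (hMf t ht 0)
  have hMLip : ∀ s ∈ Icc (0:ℝ) T, ∀ u ∈ Icc (0:ℝ) T, M u ≤ M s + K * |u - s| := by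
    intro s hs u hu
    refine ciSup_le fun x => ?_
    have h1 := hLip x s hs u hu
    have h2 := hMf s hs x
    have h3 := abs_sub_abs_le_abs_sub (f x u) (f x s)
    linarith
  have hMabs : ∀ s ∈ Icc (0:ℝ) T, ∀ u ∈ Icc (0:ℝ) T, |M u - M s| ≤ K * |u - s| := by
    intro s hs u hu
    rw [abs_sub_le_iff]
    refine ⟨by have := hMLip s hs u hu; linarith, ?_⟩
    have h := hMLip u hu s hs
    rw [abs_sub_comm s u] at h
    linarith
  have hMcont : ContinuousOn M (Icc 0 T) := by
    refine LipschitzOnWith.continuousOn (K := K.toNNReal) ?_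
    refine LipschitzOnWith.of_dist_le_mul fun x hx y hy => ?_
    rw [Real.dist_eq, Real.dist_eq, Real.coe_toNNReal K hK0]
    exact hMabs y hy x hx
  have hMax : ∀ (t b : ℝ), b < M t → ∃ x, b < |f x t| := fun t b hb => exists_lt_of_lt_ciSup hb
  have hMciSup : ∀ (t b : ℝ), (∀ x, |f x t| ≤ b) → M t ≤ b := fun t b hb => ciSup_le hb
  clear_value M
  have hslice : ∀ t ∈ Icc (0:ℝ) T, Continuous fun p => f p t := by
    intro t ht
    rw [← continuousOn_univ]
    have : ContinuousOn ((fun q : ℝ × ℝ => f q.1 q.2) ∘ fun p : ℝ => (p, t)) univ :=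
      hfc.comp ((continuous_id.prodMk continuous_const).continuousOn)
        (fun p _ => ⟨mem_univ _, ht⟩)
    exact this
  have hDc : ContinuousOn (fun q : ℝ × ℝ => D q.1 q.2) (univ ×ˢ Icc 0 T) := by
    rw [hDdef]
    refine ContinuousOn.mul (ContinuousOn.add ?_ ?_) hΛc
    · refine ContinuousOn.neg (ContinuousOn.div continuousOn_const
        (continuousOn_const.add (hfxc.pow 2)) ?_)
      intro q _
      positivity
    · refine ContinuousOn.div continuousOn_const (continuousOn_const.sub (hfc.pow 2)) ?_
      intro q hq
      have := hden q.1 q.2 hq.2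
      intro h
      rw [h] at this
      linarith
  clear_value D
  -- sign of Λf at a global max / min
  have hlamax : ∀ t ∈ Icc (0:ℝ) T, ∀ q : ℝ, (∀ p, f p t ≤ f q t) → 0 ≤ Λf q t := by
    intro t ht q hq
    refine ge_of_tendsto (hpv q t ht) ?_
    filter_upwards [self_mem_nhdsWithin] with ε _
    refine mul_nonneg (by positivity) ?_
    refine setIntegral_nonneg ((isOpen_lt continuous_const continuous_abs).measurableSet) ?_
    intro y _
    exact div_nonneg (sub_nonneg.2 (hq (q - y))) (sq_nonneg y)
  have hlamin : ∀ t ∈ Icc (0:ℝ) T, ∀ q : ℝ, (∀ p, f q t ≤ f p t) → Λf q t ≤ 0 := by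
    intro t ht q hq
    refine le_of_tendsto (hpv q t ht) ?_
    filter_upwards [self_mem_nhdsWithin] with ε _
    refine mul_nonpos_iff.mpr (Or.inl ⟨by positivity, ?_⟩)
    refine setIntegral_nonpos ((isOpen_lt continuous_const continuous_abs).measurableSet) ?_
    intro y _
    exact div_nonpos_iff.mpr (Or.inr ⟨sub_nonpos.2 (hq (q - y)), sq_nonneg y⟩)
  -- at an extremum of |f ⬝ t|, the time derivative of σ·f is ≤ 0
  have hsign : ∀ t ∈ Icc (0:ℝ) T, ∀ q : ℝ, (∀ p, |f p t| ≤ |f q t|) → 0 < |f q t| →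
      ∃ σ : ℝ, (σ = 1 ∨ σ = -1) ∧ σ * f q t = |f q t| ∧ σ * D q t ≤ 0 := by
    intro t ht q hq hpos
    have h2 := hden q t ht
    have hb1 : (0:ℝ) ≤ 1 / (1 + l ^ 2 - f q t ^ 2) := div_nonneg zero_le_one (by linarith)
    have hb2 : 1 / (1 + l ^ 2 - f q t ^ 2) ≤ 1 := by rw [div_le_one (by linarith)]; linarith
    rw [one_div] at hb2
    rcases abs_cases (f q t) with ⟨he, _⟩ | ⟨he, _⟩
    · refine ⟨1, Or.inl rfl, by rw [one_mul, he], ?_⟩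
      have hmax : ∀ p, f p t ≤ f q t := fun p =>
        le_trans (le_abs_self _) (le_trans (hq p) he.le)
      have hΛ : 0 ≤ Λf q t := hlamax t ht q hmax
      have hder0 : deriv (fun y => f y t) q = 0 := by
        have hloc : IsLocalMax (fun y => f y t) q := Filter.Eventually.of_forall hmax
        exact hloc.deriv_eq_zero
      rw [one_mul, hDdef]
      simp only [hder0]
      have hco : (-(1 / (1 + (0:ℝ) ^ 2)) + 1 / (1 + l ^ 2 - f q t ^ 2)) ≤ 0 := by
        norm_num
        linarith
      exact mul_nonpos_iff.mpr (Or.inr ⟨hco, hΛ⟩)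
    · refine ⟨-1, Or.inr rfl, by rw [neg_one_mul, he], ?_⟩
      have hmin : ∀ p, f q t ≤ f p t := fun p => by
        have := hq p
        have h4 := neg_abs_le (f p t)
        linarith
      have hΛ : Λf q t ≤ 0 := hlamin t ht q hmin
      have hder0 : deriv (fun y => f y t) q = 0 := by
        have hloc : IsLocalMin (fun y => f y t) q := Filter.Eventually.of_forall hmin
        exact hloc.deriv_eq_zero
      rw [hDdef]
      simp only [hder0]
      have hco : (-(1 / (1 + (0:ℝ) ^ 2)) + 1 / (1 + l ^ 2 - f q t ^ 2)) ≤ 0 := by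
        norm_num
        linarith
      nlinarith [mul_nonneg (neg_nonneg.2 hco) (neg_nonneg.2 hΛ)]
  -- the key Dini-derivative estimate
  have hdini : ∀ t₀ ∈ Ico (0:ℝ) T, 0 < M t₀ → ∀ r > (0:ℝ),
      ∀ᶠ z in nhdsWithin t₀ (Ioi t₀), slope M t₀ z < r := by
    intro t₀ ht₀ hm r hr
    have ht₀I : t₀ ∈ Icc (0:ℝ) T := ⟨ht₀.1, ht₀.2.le⟩
    set m : ℝ := M t₀ with hmdef
    obtain ⟨R₀, hR₀⟩ := hdecay (m / 4) (by linarith)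
    set R : ℝ := max R₀ 1 with hRdef
    have hRd : ∀ t ∈ Icc (0:ℝ) T, ∀ x : ℝ, R ≤ |x| → |f x t| ≤ m / 4 :=
      fun t ht x hx => hR₀ t ht x (le_trans (le_max_left _ _) hx)
    -- the maximum is attained
    obtain ⟨x₀, hx₀⟩ : ∃ x₀ : ℝ, m / 2 < |f x₀ t₀| := hMax t₀ (m / 2) (by linarith)
    have hx₀Icc : x₀ ∈ Icc (-R) R := by
      have habs : |x₀| ≤ R := by
        by_contra h
        push_neg at h
        have := hRd t₀ ht₀I x₀ h.le
        linarith
      exact ⟨neg_le_of_abs_le habs, le_of_abs_le habs⟩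
    obtain ⟨q₀, hq₀S, hq₀max⟩ := isCompact_Icc.exists_isMaxOn ⟨x₀, hx₀Icc⟩
      ((hslice t₀ ht₀I).abs.continuousOn)
    have hq₀max' := isMaxOn_iff.mp hq₀max
    have hq₀m : |f q₀ t₀| = m := by
      refine le_antisymm (hMf t₀ ht₀I q₀) ?_
      refine hMciSup t₀ _ fun p => ?_
      by_cases hp : R ≤ |p|
      · have h1 := hRd t₀ ht₀I p hp
        have h2 := hq₀max' x₀ hx₀Icc
        linarith
      · push_neg at hp
        exact hq₀max' p ⟨neg_le_of_abs_le hp.le, le_of_abs_le hp.le⟩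
    set Kset : Set ℝ := {p : ℝ | |f p t₀| = m} with hKsetdef
    have hKsub : Kset ⊆ Icc (-R) R := by
      intro p hp
      have hpm : |f p t₀| = m := hp
      have habs : |p| ≤ R := by
        by_contra h
        push_neg at h
        have := hRd t₀ ht₀I p h.le
        linarith
      exact ⟨neg_le_of_abs_le habs, le_of_abs_le habs⟩
    have hKclosed : IsClosed Kset := isClosed_eq (hslice t₀ ht₀I).abs continuous_const
    have hKcomp : IsCompact Kset := isCompact_Icc.of_isClosed_subset hKclosed hKsub
    have hKne : Kset.Nonempty := ⟨q₀, hq₀m⟩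
    -- neighbourhood control around each extremal point
    have hnbhd : ∀ q ∈ Kset, ∃ δ : ℝ, 0 < δ ∧ ∃ σ : ℝ, (σ = 1 ∨ σ = -1) ∧
        ∀ p s : ℝ, |p - q| < δ → s ∈ Icc (0:ℝ) T → |s - t₀| < δ →
          σ * D p s < r / 2 ∧ m / 2 < σ * f p s := by
      intro q hq
      have hqm : |f q t₀| = m := hq
      obtain ⟨σ, hσ, hσf, hσD⟩ := hsign t₀ ht₀I q
        (fun p => by rw [hqm]; exact hMf t₀ ht₀I p) (by rw [hqm]; exact hm)
      have hcont : ContinuousWithinAt (fun w : ℝ × ℝ => (σ * D w.1 w.2, σ * f w.1 w.2))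
          (univ ×ˢ Icc 0 T) (q, t₀) :=
        ((continuousOn_const.mul hDc).prodMk (continuousOn_const.mul hfc)) (q, t₀)
          ⟨mem_univ _, ht₀I⟩
      have hopen : IsOpen {w : ℝ × ℝ | w.1 < r / 2 ∧ m / 2 < w.2} :=
        (isOpen_lt continuous_fst continuous_const).inter
          (isOpen_lt continuous_const continuous_snd)
      have hmem : (σ * D q t₀, σ * f q t₀) ∈ {w : ℝ × ℝ | w.1 < r / 2 ∧ m / 2 < w.2} := by
        refine ⟨lt_of_le_of_lt hσD (by linarith), ?_⟩
        show m / 2 < σ * f q t₀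
        rw [hσf, hqm]
        linarith
      have hev : (fun w : ℝ × ℝ => (σ * D w.1 w.2, σ * f w.1 w.2)) ⁻¹'
          {w : ℝ × ℝ | w.1 < r / 2 ∧ m / 2 < w.2} ∈
          nhdsWithin (q, t₀) (univ ×ˢ Icc 0 T) := hcont (hopen.mem_nhds hmem)
      rw [Metric.mem_nhdsWithin_iff] at hev
      obtain ⟨δ, hδ, hball⟩ := hev
      refine ⟨δ, hδ, σ, hσ, fun p s hp hs hst => ?_⟩
      have hmem2 : (p, s) ∈ Metric.ball (q, t₀) δ ∩ (univ ×ˢ Icc 0 T) := by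
        refine ⟨?_, mem_univ _, hs⟩
        rw [Metric.mem_ball, Prod.dist_eq, max_lt_iff]
        exact ⟨by rwa [Real.dist_eq], by rwa [Real.dist_eq]⟩
      exact hball hmem2
    choose! δf hδf σf hσf1 hprop using hnbhd
    obtain ⟨Fin, hFinK, hFcov⟩ := hKcomp.elim_nhds_subcover (fun q => Metric.ball q (δf q / 2))
      (fun q hq => Metric.ball_mem_nhds q (by have := hδf q hq; linarith))
    have hFne : Fin.Nonempty := by
      rcases hKne with ⟨q, hq⟩
      rcases mem_iUnion₂.1 (hFcov hq) with ⟨i, hi, _⟩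
      exact ⟨i, hi⟩
    set δ : ℝ := Fin.inf' hFne (fun q => δf q / 2) with hδdef
    have hδpos : 0 < δ := by
      rw [hδdef, Finset.lt_inf'_iff]
      intro q hq
      have := hδf q (hFinK q hq)
      linarith
    set U : Set ℝ := ⋃ q ∈ Fin, Metric.ball q (δf q / 2) with hUdef
    have hUopen : IsOpen U := isOpen_biUnion fun q _ => Metric.isOpen_ball
    set CC : Set ℝ := Icc (-R) R \ U with hCCdef
    have hCCcomp : IsCompact CC := isCompact_Icc.diff hUopen
    obtain ⟨η, hηpos, hηprop⟩ : ∃ η : ℝ, 0 < η ∧ ∀ p ∈ CC, |f p t₀| ≤ m - η := by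
      rcases CC.eq_empty_or_nonempty with hE | hNE
      · refine ⟨m, hm, fun p hp => absurd hp (by rw [hE]; exact notMem_empty p)⟩
      · obtain ⟨p₁, hp₁CC, hp₁max⟩ := hCCcomp.exists_isMaxOn hNE
          (hslice t₀ ht₀I).abs.continuousOn
        have hp₁notK : p₁ ∉ Kset := fun hK => hp₁CC.2 (hFcov hK)
        have hne : |f p₁ t₀| ≠ m := hp₁notK
        have hlt : |f p₁ t₀| < m := lt_of_le_of_ne (hMf t₀ ht₀I p₁) hne
        refine ⟨m - |f p₁ t₀|, by linarith, fun p hp => ?_⟩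
        have := isMaxOn_iff.mp hp₁max p hp
        linarith
    set h₀ : ℝ := min (min δ (T - t₀)) (η / (K + 1)) with hh₀def
    have hK1 : (0:ℝ) < K + 1 := by linarith
    have hh₀pos : 0 < h₀ :=
      lt_min (lt_min hδpos (by linarith [ht₀.2])) (by positivity)
    have hh₀δ : h₀ ≤ δ := le_trans (min_le_left _ _) (min_le_left _ _)
    have hh₀T : h₀ ≤ T - t₀ := le_trans (min_le_left _ _) (min_le_right _ _)
    have hh₀η : h₀ ≤ η / (K + 1) := min_le_right _ _
    filter_upwards [Ioc_mem_nhdsGT_of_mem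
      (⟨le_rfl, by linarith⟩ : t₀ ∈ Ico t₀ (t₀ + h₀ / 2))] with z hz
    have hzT : z ∈ Icc (0:ℝ) T := ⟨by linarith [ht₀.1, hz.1.le], by linarith [hz.2]⟩
    have hsub2 : Icc t₀ z ⊆ Icc (0:ℝ) T := Icc_subset_Icc ht₀I.1 hzT.2
    have hclaim : M z ≤ m + r / 2 * (z - t₀) := by
      refine hMciSup z _ fun p => ?_
      by_cases hpR : R ≤ |p|
      · have h1 := hRd z hzT p hpR
        have h5 : 0 ≤ r / 2 * (z - t₀) := mul_nonneg (by linarith) (by linarith [hz.1])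
        linarith
      · push_neg at hpR
        have hpIcc : p ∈ Icc (-R) R := ⟨neg_le_of_abs_le hpR.le, le_of_abs_le hpR.le⟩
        by_cases hpU : p ∈ U
        · rw [hUdef, mem_iUnion₂] at hpU
          obtain ⟨q, hqF, hpq⟩ := hpU
          have hqK := hFinK q hqF
          have hδq := hδf q hqK
          have hσ1 := hσf1 q hqK
          have hpq' : |p - q| < δf q / 2 := by rwa [Metric.mem_ball, Real.dist_eq] at hpq
          have hδle : δ ≤ δf q / 2 := Finset.inf'_le _ hqF
          have hkey : ∀ s ∈ Icc t₀ z, σf q * D p s < r / 2 ∧ m / 2 < σf q * f p s := by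
            intro s hs
            have hsI : s ∈ Icc (0:ℝ) T := hsub2 hs
            refine hprop q hqK p s (by linarith) hsI ?_
            rw [abs_of_nonneg (by linarith [hs.1])]
            linarith [hs.2, hz.2]
          set g : ℝ → ℝ := fun s => σf q * f p s with hgdef
          have hfci : ContinuousOn (fun s => f p s) (Icc 0 T) :=
            fun s hs => (hderiv p s hs).continuousWithinAt
          have hgc : ContinuousOn g (Icc t₀ z) := continuousOn_const.mul (hfci.mono hsub2)
          have hgd : ∀ s ∈ interior (Icc t₀ z), HasDerivAt g (σf q * D p s) s := by
            intro s hs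
            rw [interior_Icc] at hs
            have hsIoo : s ∈ Ioo (0:ℝ) T :=
              ⟨lt_of_le_of_lt ht₀I.1 hs.1, lt_of_lt_of_le hs.2 hzT.2⟩
            have hmem : Icc (0:ℝ) T ∈ nhds s :=
              mem_nhds_iff.mpr ⟨Ioo 0 T, Ioo_subset_Icc_self, isOpen_Ioo, hsIoo⟩
            exact ((hderiv p s (Ioo_subset_Icc_self hsIoo)).hasDerivAt hmem).const_mul (σf q)
          have hgderiv : ∀ s ∈ interior (Icc t₀ z), deriv g s ≤ r / 2 := by
            intro s hs
            rw [(hgd s hs).deriv]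
            rw [interior_Icc] at hs
            exact (hkey s (Ioo_subset_Icc_self hs)).1.le
          have hgdiff : DifferentiableOn ℝ g (interior (Icc t₀ z)) :=
            fun s hs => (hgd s hs).differentiableAt.differentiableWithinAt
          have hMVT := (convex_Icc t₀ z).image_sub_le_mul_sub_of_deriv_le hgc hgdiff hgderiv
            t₀ (left_mem_Icc.mpr hz.1.le) z (right_mem_Icc.mpr hz.1.le) hz.1.le
          have hsz : m / 2 < σf q * f p z := (hkey z (right_mem_Icc.mpr hz.1.le)).2
          have habs : |f p z| = σf q * f p z := by
            rcases hσ1 with h1 | h1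
            · rw [h1, one_mul] at hsz ⊢
              exact abs_of_pos (by linarith)
            · rw [h1, neg_one_mul] at hsz ⊢
              exact abs_of_neg (by linarith)
          have hgt₀ : σf q * f p t₀ ≤ m := by
            rcases hσ1 with h1 | h1
            · rw [h1, one_mul]
              exact le_trans (le_abs_self _) (hMf t₀ ht₀I p)
            · rw [h1, neg_one_mul]
              exact le_trans (neg_le_abs _) (hMf t₀ ht₀I p)
          have hfinal : g z - g t₀ ≤ r / 2 * (z - t₀) := hMVT
          rw [habs]
          have hgz : g z = σf q * f p z := rfl
          have hgt : g t₀ = σf q * f p t₀ := rfl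
          linarith
        · have hpCC : p ∈ CC := ⟨hpIcc, hpU⟩
          have h1 := hηprop p hpCC
          have h2 := hLip p t₀ ht₀I z hzT
          have h3 := abs_sub_abs_le_abs_sub (f p z) (f p t₀)
          have h4 : K * |z - t₀| ≤ η := by
            rw [abs_of_pos (sub_pos.2 hz.1)]
            have h6 : z - t₀ ≤ h₀ := by linarith [hz.2]
            have h7 : K * (z - t₀) ≤ K * (η / (K + 1)) :=
              mul_le_mul_of_nonneg_left (le_trans h6 hh₀η) hK0
            have h8 : K * (η / (K + 1)) ≤ η := by
              rw [mul_div_assoc', div_le_iff₀ hK1]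
              nlinarith
            linarith
          have h5 : 0 ≤ r / 2 * (z - t₀) := mul_nonneg (by linarith) (by linarith [hz.1])
          linarith
    rw [slope_def_field, div_lt_iff₀ (sub_pos.2 hz.1)]
    have h9 : r / 2 * (z - t₀) < r * (z - t₀) :=
      mul_lt_mul_of_pos_right (by linarith) (sub_pos.2 hz.1)
    rw [← hmdef]
    linarith
  -- main monotonicity
  have hmono : ∀ t₁ ∈ Icc (0:ℝ) T, ∀ t₂ ∈ Icc (0:ℝ) T, t₁ ≤ t₂ → M t₂ ≤ M t₁ := by
    intro t₁ ht₁ t₂ ht₂ h12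
    rcases eq_or_lt_of_le h12 with rfl | hlt
    · exact le_rfl
    refine le_of_forall_pos_le_add fun ε' hε' => ?_
    set ε : ℝ := ε' / Real.exp (t₂ - t₁) with hεdef
    have hε : 0 < ε := by positivity
    set B : ℝ → ℝ := fun x => M t₁ + ε * Real.exp (x - t₁) with hBdef
    set B' : ℝ → ℝ := fun x => ε * Real.exp (x - t₁) with hB'def
    set F' : ℝ → ℝ := fun x => if 0 < M x then 0 else K + 1 with hF'def
    have hsub : Icc t₁ t₂ ⊆ Icc 0 T := Icc_subset_Icc ht₁.1 ht₂.2
    have key : ∀ x ∈ Icc t₁ t₂, M x ≤ B x := by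
      refine image_le_of_liminf_slope_right_lt_deriv_boundary' (f' := F') (B' := B')
        (hMcont.mono hsub) ?_ ?_ ?_ ?_ ?_
      · intro x hx r hr
        have hxI : x ∈ Icc (0:ℝ) T := hsub ⟨hx.1, hx.2.le⟩
        by_cases hMx : 0 < M x
        · have hxI' : x ∈ Ico (0:ℝ) T := ⟨hxI.1, lt_of_lt_of_le hx.2 ht₂.2⟩
          rw [hF'def] at hr
          simp only [if_pos hMx] at hr
          exact (hdini x hxI' hMx r hr).frequently
        · rw [hF'def] at hr
          simp only [if_neg hMx] at hr
          have hM0' : M x = 0 := le_antisymm (not_lt.1 hMx) (hM0 x hxI)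
          refine Filter.Eventually.frequently ?_
          filter_upwards [Ioc_mem_nhdsGT_of_mem ⟨le_rfl, hx.2⟩] with z hz
          have hzI : z ∈ Icc (0:ℝ) T := hsub ⟨le_of_lt (lt_of_le_of_lt hx.1 hz.1), hz.2⟩
          have hMz : M z ≤ K * (z - x) := by
            have := hMLip x hxI z hzI
            rw [abs_of_pos (sub_pos.2 hz.1)] at this
            linarith
          rw [slope_def_field, hM0', sub_zero]
          rw [div_lt_iff₀ (sub_pos.2 hz.1)]
          have hzx : 0 < z - x := sub_pos.2 hz.1
          nlinarith
      · rw [hBdef]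
        simp only []
        rw [sub_self, Real.exp_zero, mul_one]
        linarith
      · rw [hBdef]
        exact continuousOn_const.add (continuousOn_const.mul
          ((Real.continuous_exp.comp (continuous_id.sub continuous_const)).continuousOn))
      · intro x _
        rw [hBdef, hB'def]
        have h1 : HasDerivAt (fun y : ℝ => y - t₁) 1 x := (hasDerivAt_id x).sub_const t₁
        have h2 : HasDerivAt (fun y : ℝ => Real.exp (y - t₁)) (Real.exp (x - t₁) * 1) x := h1.exp
        have h3 : HasDerivAt (fun y : ℝ => M t₁ + ε * Real.exp (y - t₁))
            (ε * (Real.exp (x - t₁) * 1)) x := (h2.const_mul ε).const_add (M t₁)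
        simpa using h3.hasDerivWithinAt
      · intro x hx hMB
        have hxI : x ∈ Icc (0:ℝ) T := hsub ⟨hx.1, hx.2.le⟩
        have hBpos : 0 < B x := by
          rw [hBdef]
          have := hM0 t₁ (hsub ⟨le_rfl, h12⟩)
          have := Real.exp_pos (x - t₁)
          simp only []
          nlinarith
        have hMx : 0 < M x := hMB ▸ hBpos
        rw [hF'def, hB'def]
        simp only [if_pos hMx]
        positivity
    have h2 := key t₂ ⟨h12, le_rfl⟩
    rw [hBdef] at h2
    simp only [] at h2
    have : ε * Real.exp (t₂ - t₁) = ε' := by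
      rw [hεdef, div_mul_cancel₀]
      exact (Real.exp_pos _).ne'
    linarith
  simp only [hMdef] at hmono
  exact ⟨fun t₁ ht₁ t₂ ht₂ h12 => hmono t₁ ht₁ t₂ ht₂ h12,
    fun t ht => hmono 0 h0T t ht ht.1⟩
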